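/- Under the hypotheses of the F-family, if in addition 0 < c ≤ 1/3.1, then M̃ > M; in particular the inequality (R): M̃ ≤ M fails, so the case L−R+ is not realizable by F. -/

import Mathlib

lemma deriv_quintic_F (a b c x : ℝ) :
    deriv (fun t : ℝ => t * (t - a) * (t - b) * (t - c) * (t - 1)) x
      = (x-a)*(x-b)*(x-c)*(x-1) + x*(x-b)*(x-c)*(x-1) + x*(x-a)*(x-c)*(x-1)
        + x*(x-a)*(x-b)*(x-1) + x*(x-a)*(x-b)*(x-c) := by
  have h1 : HasDerivAt (fun t : ℝ => t) 1 x := hasDerivAt_id x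
  have h2 : HasDerivAt (fun t : ℝ => t - a) 1 x := (hasDerivAt_id x).sub_const a
  have h3 : HasDerivAt (fun t : ℝ => t - b) 1 x := (hasDerivAt_id x).sub_const b
  have h4 : HasDerivAt (fun t : ℝ => t - c) 1 x := (hasDerivAt_id x).sub_const c
  have h5 : HasDerivAt (fun t : ℝ => t - 1) 1 x := (hasDerivAt_id x).sub_const 1
  have h := (((h1.mul h2).mul h3).mul h4).mul h5
  exact h.deriv.trans (by simp only [Pi.mul_apply]; ring)

lemma Dneg_aux (a b c x : ℝ) (ha : 0 ≤ a) (hab : a ≤ b) (hbc : b ≤ c)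
    (hc : c ≤ 10/31) (hcx : c < x) (hx : x ≤ c + (1-b)/2) :
    (x-a)*(x-b)*(x-c)*(x-1) + x*(x-b)*(x-c)*(x-1) + x*(x-a)*(x-c)*(x-1)
        + x*(x-a)*(x-b)*(x-1) + x*(x-a)*(x-b)*(x-c) < 0 := by
  have hb0 : 0 ≤ b := le_trans ha hab
  have hc0 : 0 ≤ c := le_trans hb0 hbc
  have ht0 : 0 < x - c := by linarith
  have ht2 : x - c ≤ 1/2 := by linarith
  have hq : 0 < x - a := by linarith
  have hr : 0 < x - b := by linarith
  have hw : x - 1 < 0 := by linarith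
  -- key quadratic inequality
  have h1 : x*(x-c) - (1-x)*(4*x-3*c) < 0 := by
    nlinarith [mul_nonneg (by linarith : (0:ℝ) ≤ 1 - 2*(x-c)) (by nlinarith : (0:ℝ) ≤ c*(1-c)),
      mul_pos ht0 (by nlinarith : (0:ℝ) < 3/4 - 2*c - c^2),
      mul_nonneg ht0.le (by linarith : (0:ℝ) ≤ 1/2 - (x-c))]
  have h5 : ((x-a)*(x-b)) * (x*(x-c) - (1-x)*(4*x-3*c)) < 0 :=
    mul_neg_of_pos_of_neg (mul_pos hq hr) h1
  have h6 : (x-1) * (a*((x-b)*(x-c)) + b*((x-a)*(x-c))) ≤ 0 := by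
    apply mul_nonpos_of_nonpos_of_nonneg hw.le
    have := mul_nonneg ha (mul_nonneg hr.le ht0.le)
    have := mul_nonneg hb0 (mul_nonneg hq.le ht0.le)
    linarith
  have hD : (x-a)*(x-b)*(x-c)*(x-1) + x*(x-b)*(x-c)*(x-1) + x*(x-a)*(x-c)*(x-1)
        + x*(x-a)*(x-b)*(x-1) + x*(x-a)*(x-b)*(x-c)
      = ((x-a)*(x-b)) * (x*(x-c) - (1-x)*(4*x-3*c))
        + (x-1) * (a*((x-b)*(x-c)) + b*((x-a)*(x-c))) := by ring
  linarith [hD ▸ add_lt_add_of_lt_of_le h5 h6]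

/-- For `F(x) = x(x-a)(x-b)(x-c)(x-1)` with `0 ≤ a ≤ b ≤ c ≤ 1` and `0 < c ≤ 1/3.1`,
one has `M̃ > M`; in particular `(R) : M̃ ≤ M` fails, so the case L−R+ (`m > m̃` and
`M̃ ≤ M`) is not realizable by `F`. -/
theorem F_family_c_le_inv31_Rminus
    (a b c : ℝ) (ha : 0 ≤ a) (hab : a ≤ b) (hbc : b ≤ c) (hc1 : c ≤ 1)
    (hc0 : 0 < c) (hc : c ≤ 1 / 3.1)
    (ξ₁ ξ₂ ξ₃ ξ₄ : ℝ) (hξ12 : ξ₁ ≤ ξ₂) (hξ23 : ξ₂ ≤ ξ₃) (hξ34 : ξ₃ ≤ ξ₄)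
    (hder : ∀ x : ℝ,
      deriv (fun t : ℝ => t * (t - a) * (t - b) * (t - c) * (t - 1)) x
        = 5 * (x - ξ₁) * (x - ξ₂) * (x - ξ₃) * (x - ξ₄))
    (z₁ z₂ z₃ z₄ m M mt Mt : ℝ)
    (hz₁ : z₁ = a / 2) (hz₂ : z₂ = (a + b) / 2)
    (hz₃ : z₃ = (b + c) / 2) (hz₄ : z₄ = (c + 1) / 2)
    (hm : m = min (min (z₂ - z₁) (z₃ - z₂)) (z₄ - z₃))
    (hM : M = max (max (z₂ - z₁) (z₃ - z₂)) (z₄ - z₃))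
    (hmt : mt = min (min (ξ₂ - ξ₁) (ξ₃ - ξ₂)) (ξ₄ - ξ₃))
    (hMt : Mt = max (max (ξ₂ - ξ₁) (ξ₃ - ξ₂)) (ξ₄ - ξ₃)) :
    Mt > M ∧ ¬ (mt < m ∧ Mt ≤ M) := by
  have hc' : c ≤ 10/31 := by
    norm_num at hc
    linarith
  have hb0 : 0 ≤ b := le_trans ha hab
  have key : ∀ x : ℝ, (x-a)*(x-b)*(x-c)*(x-1) + x*(x-b)*(x-c)*(x-1)
      + x*(x-a)*(x-c)*(x-1) + x*(x-a)*(x-b)*(x-1) + x*(x-a)*(x-b)*(x-c)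
      = 5 * (x - ξ₁) * (x - ξ₂) * (x - ξ₃) * (x - ξ₄) := by
    intro x
    rw [← deriv_quintic_F a b c x]
    exact hder x
  have he1 : ξ₁ + ξ₂ + ξ₃ + ξ₄ = 4*(1+a+b+c)/5 := by
    linear_combination (key 2 - key (-2) - 2*(key 1) + 2*(key (-1)))/60
  have he4 : ξ₁*ξ₂*ξ₃*ξ₄ = a*b*c/5 := by
    linear_combination -(key 0)/5
  obtain ⟨x1, hx1def⟩ : ∃ x1 : ℝ, x1 = c + (1-b)/2 := ⟨_, rfl⟩
  have hx1c : c < x1 := by rw [hx1def]; linarith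
  have hx1pos : 0 < x1 := lt_trans hc0 hx1c
  have hkey1 : 5 * (x1 - ξ₁) * (x1 - ξ₂) * (x1 - ξ₃) * (x1 - ξ₄) < 0 := by
    rw [← key x1]
    exact Dneg_aux a b c x1 ha hab hbc hc' hx1c (le_of_eq hx1def)
  have hξ4 : x1 < ξ₄ := by
    by_contra h; push_neg at h
    have f1 : 0 ≤ x1 - ξ₄ := by linarith
    have f2 : 0 ≤ x1 - ξ₃ := by linarith
    have f3 : 0 ≤ x1 - ξ₂ := by linarith
    have f4 : 0 ≤ x1 - ξ₁ := by linarith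
    have hnn : 0 ≤ 5 * (x1 - ξ₁) * (x1 - ξ₂) * (x1 - ξ₃) * (x1 - ξ₄) := by
      have h0 := mul_nonneg (mul_nonneg (mul_nonneg f4 f3) f2) f1
      have e : 5 * (x1 - ξ₁) * (x1 - ξ₂) * (x1 - ξ₃) * (x1 - ξ₄)
          = 5 * ((x1 - ξ₁) * (x1 - ξ₂) * (x1 - ξ₃) * (x1 - ξ₄)) := by ring
      rw [e]; linarith
    linarith
  have hξ2 : ξ₂ ≤ x1 := by
    by_contra h; push_neg at h
    have p2 : 0 < ξ₂ := lt_trans hx1pos h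
    have p3 : 0 < ξ₃ := lt_of_lt_of_le p2 hξ23
    have p4 : 0 < ξ₄ := lt_of_lt_of_le p3 hξ34
    have hprod : 0 < ξ₂*(ξ₃*ξ₄) := mul_pos p2 (mul_pos p3 p4)
    have hξ1nn : 0 ≤ ξ₁ := by
      by_contra h1; push_neg at h1
      have hneg : ξ₁ * (ξ₂*(ξ₃*ξ₄)) < 0 := mul_neg_of_neg_of_pos h1 hprod
      have habc : 0 ≤ a*b*c := mul_nonneg (mul_nonneg ha hb0) hc0.le
      nlinarith [he4]
    have hsum : 3*x1 ≥ 4*(1+a+b+c)/5 := by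
      have h8 : 8*a + 23*b ≤ 31*c := by linarith
      have h9 : 9*c ≤ 90/31 := by linarith
      rw [hx1def]
      linarith
    have h3 : x1 < ξ₃ := lt_of_lt_of_le h hξ23
    have h4 : x1 < ξ₄ := hξ4
    linarith [he1]
  have hξ3 : ξ₃ ≤ c := by
    by_contra h; push_neg at h
    rcases le_or_gt ξ₃ x1 with h3 | h3
    · have hzero : 5 * (ξ₃ - ξ₁) * (ξ₃ - ξ₂) * (ξ₃ - ξ₃) * (ξ₃ - ξ₄) = 0 := by ring
      rw [hx1def] at h3
      have := Dneg_aux a b c ξ₃ ha hab hbc hc' h h3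
      rw [key ξ₃] at this
      linarith
    · have f3 : x1 - ξ₃ < 0 := by linarith
      have f4 : x1 - ξ₄ < 0 := by linarith
      have f2 : 0 ≤ x1 - ξ₂ := by linarith
      have f1 : 0 ≤ x1 - ξ₁ := by linarith
      have h0 := mul_nonneg (mul_nonneg f1 f2) (mul_pos_of_neg_of_neg f3 f4).le
      have e : 5 * (x1 - ξ₁) * (x1 - ξ₂) * (x1 - ξ₃) * (x1 - ξ₄)
          = 5 * ((x1 - ξ₁) * (x1 - ξ₂) * ((x1 - ξ₃) * (x1 - ξ₄))) := by ring
      rw [e] at hkey1; linarith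
  have hgap : (1-b)/2 < ξ₄ - ξ₃ := by
    rw [hx1def] at hξ4
    linarith
  have hMval : M = z₄ - z₃ := by
    rw [hM]
    apply max_eq_right
    apply max_le
    · rw [hz₁, hz₂, hz₃, hz₄]; linarith
    · rw [hz₂, hz₃, hz₄]; linarith
  have hMval' : M = (1-b)/2 := by rw [hMval, hz₃, hz₄]; ring
  have hMtge : ξ₄ - ξ₃ ≤ Mt := by rw [hMt]; exact le_max_right _ _
  have hgt : Mt > M := by rw [hMval']; linarith
  exact ⟨hgt, fun hcon => absurd hcon.2 (not_le.mpr hgt)⟩
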